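/- Let G be a simple oriented hypergraph and θ a vertex-switching function. Then the Laplacian of the switched hypergraph satisfies L_{G^θ} = D(θ)^T · L_G · D(θ). -/

import Mathlib

open Matrix

/-- A simple oriented hypergraph: each vertex-edge pair is incident at most once,
`σ v e` is the sign (±1) of the incidence `(v,e)`, and `σ v e = 0` when `v` and
`e` are not incident. -/
structure SOHG (V E : Type) where
  σ : V → E → ℤ
  σ_mem : ∀ v e, σ v e = 1 ∨ σ v e = -1 ∨ σ v e = 0

variable {V E : Type} [Fintype V] [Fintype E] [DecidableEq V] [DecidableEq E]

/-- The adjacency matrix: `a_ij = ∑_e sgn_e(v_i,v_j)` where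
`sgn_e(v,w) = -σ(v,e)σ(w,e)` (which is `0` unless both are incident to `e`);
a simple oriented hypergraph has no self-adjacencies, so the diagonal is `0`. -/
def SOHG.adj (G : SOHG V E) : Matrix V V ℤ :=
  Matrix.of fun i j => if i = j then 0 else ∑ e, -(G.σ i e * G.σ j e)

/-- The degree of a vertex: the number of incidences (= incident edges) containing it. -/
def SOHG.deg (G : SOHG V E) (v : V) : ℕ :=
  (Finset.univ.filter fun e => G.σ v e ≠ 0).card

/-- The degree matrix. -/
def SOHG.degMatrix (G : SOHG V E) : Matrix V V ℤ :=
  Matrix.diagonal fun v => (G.deg v : ℤ)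

/-- The Laplacian matrix `L_G = D_G - A_G`. -/
def SOHG.lap (G : SOHG V E) : Matrix V V ℤ := G.degMatrix - G.adj

/-- The incidence matrix: the `(v,e)`-entry is `σ(v,e)` (which is `0` when `v`
and `e` are not incident). -/
def SOHG.H (G : SOHG V E) : Matrix V E ℤ := Matrix.of fun v e => G.σ v e

/-- Vertex-switching: replace `σ(v,e)` by `θ(v)σ(v,e)` for a switching function
`θ : V → {+1,-1}`. -/
def SOHG.switch (G : SOHG V E) (θ : V → ℤ) (hθ : ∀ v, θ v = 1 ∨ θ v = -1) :
    SOHG V E :=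
  ⟨fun v e => θ v * G.σ v e, by
    intro v e
    rcases hθ v with h | h <;> rcases G.σ_mem v e with h' | h' | h' <;>
      simp [h, h']⟩

/-- If `θ` is a vertex-switching function on `G`, then
`L_{G^θ} = D(θ)ᵀ · L_G · D(θ)`. -/
theorem lap_switch (G : SOHG V E) (θ : V → ℤ) (hθ : ∀ v, θ v = 1 ∨ θ v = -1) :
    (G.switch θ hθ).lap = (Matrix.diagonal θ)ᵀ * G.lap * Matrix.diagonal θ := by
  have hθ2 : ∀ v, θ v * θ v = 1 := by
    intro v; rcases hθ v with h | h <;> simp [h]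
  ext i j
  rw [Matrix.diagonal_transpose, Matrix.mul_diagonal, Matrix.diagonal_mul]
  simp only [SOHG.lap, SOHG.degMatrix, SOHG.adj, SOHG.deg, SOHG.switch,
    Matrix.sub_apply, Matrix.diagonal_apply, Matrix.of_apply]
  by_cases h : i = j
  · subst h
    have hdeg : ∀ e, (θ i * G.σ i e ≠ 0) ↔ (G.σ i e ≠ 0) := by
      intro e; rcases hθ i with h | h <;> simp [h]
    simp only [if_pos rfl]
    simp only [hdeg]
    have : θ i ^ 2 = 1 := by rw [sq, hθ2 i]
    simp [this]
    rw [mul_comm (θ i), mul_assoc, hθ2 i, mul_one]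
  · simp only [if_neg h]
    rw [Finset.sum_congr rfl (fun e _ => by ring_nf :
      ∀ e ∈ Finset.univ, -(θ i * G.σ i e * (θ j * G.σ j e))
        = θ i * (-(G.σ i e * G.σ j e)) * θ j)]
    rw [← Finset.sum_mul, ← Finset.mul_sum]
    ring
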